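/- (Completeness direction) Every ω-word in L_{q₀q,all} · ((L_{qq,rej})* · L_{qq,acc})^ω, for q₀ ∈ Q₀ and q ∈ F̃, has a run in B that starts at q₀ and traverses an accepting transition out of q infinitely many times, hence is accepted by B. -/

import Mathlib

open Computability

/-- `l` is a prefix of the ω-word `σ`. -/
def ListPrefixOf {α : Type*} (l : List α) (σ : ℕ → α) : Prop :=
  ∀ k (h : k < l.length), l.get ⟨k, h⟩ = σ k

/-- `σ` is the infinite concatenation of the nonempty finite words `f 0, f 1, f 2, …`. -/
def InfConcat {α : Type*} (f : ℕ → List α) (σ : ℕ → α) : Prop :=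
  (∀ n, f n ≠ []) ∧ ∀ n, ListPrefixOf ((List.ofFn (fun i : Fin n => f i)).flatten) σ

/-- The ω-power `S^ω`: ω-words that are infinite concatenations of words from `S`. -/
def omegaPow {α : Type*} (S : Language α) : Set (ℕ → α) :=
  {σ | ∃ f : ℕ → List α, (∀ n, f n ∈ S) ∧ InfConcat f σ}

/-- The ω-word obtained by prepending the finite word `u` to the ω-word `τ`. -/
def ωAppend {α : Type*} (u : List α) (τ : ℕ → α) : ℕ → α :=
  fun n => if h : n < u.length then u.get ⟨n, h⟩ else τ (n - u.length)

/-- Concatenation `A · L` of a language of finite words with an ω-language. -/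
def catOmega {α : Type*} (A : Language α) (L : Set (ℕ → α)) : Set (ℕ → α) :=
  {σ | ∃ u ∈ A, ∃ τ ∈ L, σ = ωAppend u τ}

/-- A transition-based nondeterministic Büchi automaton. -/
structure NBA (Q α : Type*) where
  Δ : Set (Q × α × Q)
  Q0 : Set Q
  Acc : Set (Q × α × Q)
  acc_sub : Acc ⊆ Δ

namespace NBA

variable {Q α : Type*}

/-- `F̃`: states with at least one outgoing accepting transition. -/
def Ftil (B : NBA Q α) : Set Q := {q | ∃ t y, (q, t, y) ∈ B.Acc}

/-- `p` is a run of the nonempty finite word `w` in `B` from `i` ending upon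
first reaching `j` (i.e. `j` is visited exactly once, at the end). -/
def FinRun (B : NBA Q α) (i j : Q) (w : List α) (p : ℕ → Q) : Prop :=
  p 0 = i ∧ p w.length = j ∧
  (∀ k (h : k < w.length), (p k, w.get ⟨k, h⟩, p (k + 1)) ∈ B.Δ) ∧
  (∀ k, 0 < k → k < w.length → p k ≠ j)

/-- `L_{ij,all}`: nonempty words with a run in `B` from `i` ending upon first reaching `j`. -/
def Lall (B : NBA Q α) (i j : Q) : Language α :=
  {w | w ≠ [] ∧ ∃ p : ℕ → Q, B.FinRun i j w p}

/-- `L_{ij,rej}`: words of `L_{ij,all}` with such a run whose first transition is rejecting. -/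
def Lrej (B : NBA Q α) (i j : Q) : Language α :=
  {w | w ≠ [] ∧ ∃ p : ℕ → Q, B.FinRun i j w p ∧
    ∀ h : 0 < w.length, (p 0, w.get ⟨0, h⟩, p 1) ∉ B.Acc}

/-- `L_{ij,acc}`: words of `L_{ij,all}` with such a run whose first transition is accepting. -/
def Lacc (B : NBA Q α) (i j : Q) : Language α :=
  {w | w ≠ [] ∧ ∃ p : ℕ → Q, B.FinRun i j w p ∧
    ∀ h : 0 < w.length, (p 0, w.get ⟨0, h⟩, p 1) ∈ B.Acc}

/-- `ρ` is a run of the ω-word `σ` in `B`. -/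
def ωRun (B : NBA Q α) (σ : ℕ → α) (ρ : ℕ → Q) : Prop :=
  ρ 0 ∈ B.Q0 ∧ ∀ k, (ρ k, σ k, ρ (k + 1)) ∈ B.Δ

/-- `B` accepts `σ`: some run traverses accepting transitions at infinitely many positions. -/
def Accepts (B : NBA Q α) (σ : ℕ → α) : Prop :=
  ∃ ρ : ℕ → Q, B.ωRun σ ρ ∧ ∀ N, ∃ k ≥ N, (ρ k, σ k, ρ (k + 1)) ∈ B.Acc

end NBA

section Helpers

variable {Q α : Type*}

/-- A weak run: endpoints plus transitions, no "first reach" condition. -/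
def WRun (B : NBA Q α) (i j : Q) (w : List α) (p : ℕ → Q) : Prop :=
  p 0 = i ∧ p w.length = j ∧ ∀ k (h : k < w.length), (p k, w.get ⟨k, h⟩, p (k + 1)) ∈ B.Δ

/-- A weak run from `q` to `q` together with an accepting transition out of `q`. -/
def GoodRun (B : NBA Q α) (q : Q) (w : List α) (p : ℕ → Q) : Prop :=
  WRun B q q w p ∧
    ∃ k, ∃ h : k < w.length, p k = q ∧ (p k, w.get ⟨k, h⟩, p (k + 1)) ∈ B.Acc

lemma wrun_of_finRun {B : NBA Q α} {i j : Q} {w : List α} {p : ℕ → Q}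
    (h : B.FinRun i j w p) : WRun B i j w p :=
  ⟨h.1, h.2.1, h.2.2.1⟩

lemma wrun_append {B : NBA Q α} {q : Q} {w1 w2 : List α} {p1 p2 : ℕ → Q}
    (h1 : WRun B q q w1 p1) (h2 : WRun B q q w2 p2) :
    WRun B q q (w1 ++ w2)
      (fun k => if k < w1.length then p1 k else p2 (k - w1.length)) := by
  obtain ⟨e1, f1, t1⟩ := h1
  obtain ⟨e2, f2, t2⟩ := h2
  have hnext : ∀ k, k < w1.length →
      (fun k => if k < w1.length then p1 k else p2 (k - w1.length)) (k + 1) = p1 (k + 1) := by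
    intro k hk
    by_cases hk1 : k + 1 < w1.length
    · simp [hk1]
    · have hk1' : k + 1 = w1.length := by omega
      simp only [if_neg hk1]
      rw [hk1', Nat.sub_self, e2, f1]
  refine ⟨?_, ?_, ?_⟩
  · by_cases h0 : 0 < w1.length
    · simp only [h0, if_pos, e1]
    · have : w1.length = 0 := by omega
      simp [this, e2]
  · simp only [List.length_append]
    rw [if_neg (by omega : ¬ w1.length + w2.length < w1.length),
      Nat.add_sub_cancel_left, f2]
  · intro k hk
    simp only [List.length_append] at hk
    by_cases hkl : k < w1.length
    · rw [hnext k hkl]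
      simp only [hkl, if_pos]
      have hget : (w1 ++ w2).get ⟨k, by simp; omega⟩ = w1.get ⟨k, hkl⟩ := by
        simp [List.getElem_append_left hkl]
      rw [hget]
      exact t1 k hkl
    · push_neg at hkl
      have hk2 : k - w1.length < w2.length := by omega
      have hk1 : ¬ k + 1 < w1.length := by omega
      simp only [if_neg (by omega : ¬ k < w1.length), if_neg hk1]
      have hsub : k + 1 - w1.length = (k - w1.length) + 1 := by omega
      rw [hsub]
      have hget : (w1 ++ w2).get ⟨k, by simp; omega⟩ = w2.get ⟨k - w1.length, hk2⟩ := by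
        simp [List.getElem_append_right hkl]
      rw [hget]
      exact t2 (k - w1.length) hk2

lemma goodrun_append {B : NBA Q α} {q : Q} {w1 w2 : List α} {p1 : ℕ → Q}
    (h1 : WRun B q q w1 p1) (h2 : ∃ p, GoodRun B q w2 p) :
    ∃ p, GoodRun B q (w1 ++ w2) p := by
  obtain ⟨p2, ⟨hw2, k, hk, hpk, hacc⟩⟩ := h2
  refine ⟨_, wrun_append h1 hw2, w1.length + k, by simp; omega, ?_, ?_⟩
  · simp only [if_neg (by omega : ¬ w1.length + k < w1.length), Nat.add_sub_cancel_left, hpk]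
  · have e1 : (if w1.length + k < w1.length then p1 (w1.length + k)
        else p2 (w1.length + k - w1.length)) = p2 k := by
      simp only [if_neg (by omega : ¬ w1.length + k < w1.length), Nat.add_sub_cancel_left]
    have e2 : (if w1.length + k + 1 < w1.length then p1 (w1.length + k + 1)
        else p2 (w1.length + k + 1 - w1.length)) = p2 (k + 1) := by
      simp only [if_neg (by omega : ¬ w1.length + k + 1 < w1.length)]
      congr 1; omega
    have hget : (w1 ++ w2).get ⟨w1.length + k, by simp; omega⟩ = w2.get ⟨k, hk⟩ := by
      simp [List.getElem_append_right (by omega : w1.length ≤ w1.length + k)]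
    simpa only [e1, e2, hget] using hacc

lemma good_of_mem {B : NBA Q α} {q : Q} {w : List α}
    (hw : w ∈ (B.Lrej q q)∗ * B.Lacc q q) :
    w ≠ [] ∧ ∃ p, GoodRun B q w p := by
  rw [Language.mem_mul] at hw
  obtain ⟨a, ha, b, hb, hab⟩ := hw
  obtain ⟨hbne, pb, hpb, hbacc⟩ := hb
  have hb0 : 0 < b.length := List.length_pos_iff.mpr hbne
  have hgoodb : ∃ p, GoodRun B q b p :=
    ⟨pb, wrun_of_finRun hpb, 0, hb0, hpb.1, hbacc hb0⟩
  rw [Language.mem_kstar] at ha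
  obtain ⟨L, hL, hLmem⟩ := ha
  subst hab
  subst hL
  constructor
  · simp [hbne]
  · clear hbacc hpb
    induction L with
    | nil => simpa using hgoodb
    | cons x L ih =>
      have hx : x ∈ B.Lrej q q := hLmem x List.mem_cons_self
      obtain ⟨-, px, hpx, -⟩ := hx
      have ihh := ih (fun y hy => hLmem y (List.mem_cons_of_mem x hy))
      have : (x :: L).flatten ++ b = x ++ (L.flatten ++ b) := by
        simp [List.flatten_cons, List.append_assoc]
      rw [this]
      exact goodrun_append (wrun_of_finRun hpx) ihh

/-- Build an infinite run along an infinite concatenation of "good" words. -/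
lemma inf_run {B : NBA Q α} {q : Q} {g : ℕ → List α} {τ : ℕ → α}
    (hcc : InfConcat g τ) (hgood : ∀ n, ∃ p, GoodRun B q (g n) p) :
    ∃ ρ : ℕ → Q, ρ 0 = q ∧ (∀ k, (ρ k, τ k, ρ (k + 1)) ∈ B.Δ) ∧
      ∀ N, ∃ k ≥ N, ρ k = q ∧ (ρ k, τ k, ρ (k + 1)) ∈ B.Acc := by
  obtain ⟨hne, hpre⟩ := hcc
  choose p hp using hgood
  set cum : ℕ → ℕ := fun n => ∑ i ∈ Finset.range n, (g i).length with hcum_def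
  have hflatlen : ∀ n, ((List.ofFn fun i : Fin n => g i).flatten).length = cum n := by
    intro n
    simp [List.length_flatten, List.map_ofFn, Function.comp_def, hcum_def,
      List.sum_ofFn]
    exact Fin.sum_univ_eq_sum_range (fun i => (g i).length) n
  have hcum_succ : ∀ n, cum (n + 1) = cum n + (g n).length := by
    intro n; simp [hcum_def, Finset.sum_range_succ]
  have hlenpos : ∀ n, 0 < (g n).length := fun n => List.length_pos_iff.mpr (hne n)
  have hcum_mono : StrictMono cum := by
    apply strictMono_nat_of_lt_succ
    intro n; rw [hcum_succ]; have := hlenpos n; omega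
  have hcum_ge : ∀ n, n ≤ cum n := by
    intro n
    induction n with
    | zero => simp
    | succ m ih => rw [hcum_succ]; have := hlenpos m; omega
  have hcum0 : cum 0 = 0 := by simp [hcum_def]
  set seg : ℕ → ℕ := fun k => Nat.findGreatest (fun n => cum n ≤ k) (k + 1) with hseg_def
  have hseg1 : ∀ k, cum (seg k) ≤ k := by
    intro k
    exact Nat.findGreatest_spec (P := fun n => cum n ≤ k) (m := 0) (by omega)
      (by simp [hcum_def])
  have hseg2 : ∀ k, k < cum (seg k + 1) := by
    intro k
    by_contra hcon
    push_neg at hcon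
    have hb : seg k + 1 ≤ k + 1 := by
      have := hcum_ge (seg k + 1); omega
    exact Nat.findGreatest_is_greatest (P := fun n => cum n ≤ k) (lt_add_one _) hb hcon
  clear_value cum seg
  clear hcum_def hseg_def
  have hseg_eq : ∀ n k, cum n ≤ k → k < cum (n + 1) → seg k = n := by
    intro n k h1 h2
    have hs1 := hseg1 k
    have hs2 := hseg2 k
    have hlt1 : seg k < n + 1 := by
      by_contra hcon
      push_neg at hcon
      have := hcum_mono.monotone hcon
      omega
    have hlt2 : n < seg k + 1 := by
      by_contra hcon
      push_neg at hcon
      have := hcum_mono.monotone (by omega : seg k + 1 ≤ n)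
      omega
    omega
  have hlt_len : ∀ k, k - cum (seg k) < (g (seg k)).length := by
    intro k
    have h1 := hseg1 k
    have h2 := hseg2 k
    rw [hcum_succ] at h2
    omega
  have htau : ∀ k, τ k = (g (seg k)).get ⟨k - cum (seg k), hlt_len k⟩ := by
    intro k
    set n := seg k with hn
    have h1 := hseg1 k
    have h2 := hseg2 k
    have hsplit : (List.ofFn fun i : Fin (n + 1) => g i).flatten
        = (List.ofFn fun i : Fin n => g i).flatten ++ g n := by
      rw [List.ofFn_succ']
      simp [List.concat_eq_append, List.flatten_append]
    have hklen : k < ((List.ofFn fun i : Fin (n + 1) => g i).flatten).length := by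
      rw [hflatlen]; exact h2
    have := hpre (n + 1) k hklen
    rw [← this, List.get_eq_getElem, List.getElem_of_eq hsplit hklen,
      List.getElem_append_right (by rw [hflatlen]; exact h1)]
    simp [hflatlen]
    rfl
  set ρ : ℕ → Q := fun k => p (seg k) (k - cum (seg k)) with hρ_def
  have hρ0 : ρ 0 = q := by
    have : seg 0 = 0 := hseg_eq 0 0 (by omega)
      (by rw [hcum_succ 0, hcum0]; simpa using hlenpos 0)
    simp only [hρ_def, this, hcum0, Nat.sub_zero]
    exact (hp 0).1.1
  have hstep : ∀ k, ρ (k + 1) = p (seg k) (k - cum (seg k) + 1) := by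
    intro k
    set n := seg k with hn
    have h1 : cum n ≤ k := hseg1 k
    have h2 : k < cum (n + 1) := hseg2 k
    by_cases hc : k + 1 < cum (n + 1)
    · have : seg (k + 1) = n := hseg_eq n (k + 1) (by omega) hc
      simp only [hρ_def, this]
      congr 1
      omega
    · have hk1 : k + 1 = cum (n + 1) := by omega
      have hs : seg (k + 1) = n + 1 := by
        refine hseg_eq (n + 1) (k + 1) (by omega) ?_
        rw [hk1]; exact hcum_mono (by omega)
      have e1 : ρ (k + 1) = q := by
        have hz : k + 1 - cum (n + 1) = 0 := by omega
        show p (seg (k + 1)) (k + 1 - cum (seg (k + 1))) = q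
        rw [hs, hz]
        exact (hp (n + 1)).1.1
      have e2 : k - cum n + 1 = (g n).length := by
        rw [hcum_succ] at hk1; omega
      rw [e1, e2]
      exact ((hp n).1.2.1).symm
  refine ⟨ρ, hρ0, ?_, ?_⟩
  · intro k
    have hρk : ρ k = p (seg k) (k - cum (seg k)) := rfl
    rw [hρk, hstep k, htau k]
    exact (hp (seg k)).1.2.2 (k - cum (seg k)) (hlt_len k)
  · intro N
    obtain ⟨kn, hkn, hpkn, hacc⟩ := (hp N).2
    refine ⟨cum N + kn, by have := hcum_ge N; omega, ?_⟩
    have hsegk : seg (cum N + kn) = N := by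
      refine hseg_eq N _ (by omega) ?_
      rw [hcum_succ]; omega
    have hsub : cum N + kn - cum N = kn := by omega
    have hρk : ρ (cum N + kn) = p N kn := by
      simp only [hρ_def, hsegk, hsub]
    have hρk1 : ρ (cum N + kn + 1) = p N (kn + 1) := by
      rw [hstep (cum N + kn), hsegk, hsub]
    have hτk : τ (cum N + kn) = (g N).get ⟨kn, hkn⟩ := by
      have h1 : (g (seg (cum N + kn)))[cum N + kn - cum (seg (cum N + kn))]?
          = some (τ (cum N + kn)) := by
        rw [List.getElem?_eq_getElem (hlt_len (cum N + kn)), htau (cum N + kn)]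
        simp
      rw [hsegk, hsub, List.getElem?_eq_getElem hkn] at h1
      simpa using h1.symm
    rw [hρk, hρk1, hτk]
    exact ⟨hpkn, hacc⟩

end Helpers

/-- completeness direction: every ω-word in
`L_{q₀q,all} · ((L_{qq,rej})* · L_{qq,acc})^ω`, for `q₀ ∈ Q₀` and `q ∈ F̃`, has a run
in `B` starting at `q₀` that traverses an accepting transition out of `q` infinitely
many times; hence it is accepted by `B`. -/
theorem stmt5 {Q α : Type*} (B : NBA Q α) (q0 q : Q)
    (hq0 : q0 ∈ B.Q0) (hq : q ∈ B.Ftil) (σ : ℕ → α)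
    (h : σ ∈ catOmega (B.Lall q0 q) (omegaPow ((B.Lrej q q)∗ * B.Lacc q q))) :
    (∃ ρ : ℕ → Q, ρ 0 = q0 ∧ (∀ k, (ρ k, σ k, ρ (k + 1)) ∈ B.Δ) ∧
      ∀ N, ∃ k ≥ N, ρ k = q ∧ (ρ k, σ k, ρ (k + 1)) ∈ B.Acc) ∧
    B.Accepts σ := by
  obtain ⟨u, hu, τ, hτ, hσ⟩ := h
  obtain ⟨hune, pu, hpu⟩ := hu
  obtain ⟨g, hg, hcc⟩ := hτ
  have hgood : ∀ n, ∃ p, GoodRun B q (g n) p := fun n => (good_of_mem (hg n)).2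
  obtain ⟨ρτ, hρτ0, hρτΔ, hρτacc⟩ := inf_run hcc hgood
  have hu0 : 0 < u.length := List.length_pos_iff.mpr hune
  set ρ : ℕ → Q := fun k => if k < u.length then pu k else ρτ (k - u.length) with hρ_def
  have hρ0 : ρ 0 = q0 := by simp only [hρ_def, if_pos hu0]; exact hpu.1
  have hstep : ∀ k, k < u.length → ρ (k + 1) = pu (k + 1) := by
    intro k hk
    by_cases hk1 : k + 1 < u.length
    · simp [hρ_def, hk1]
    · have hk1' : k + 1 = u.length := by omega
      simp only [hρ_def, if_neg hk1]
      rw [hk1', Nat.sub_self, hρτ0]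
      exact hpu.2.1.symm
  have hσval : ∀ k, σ k = if h : k < u.length then u.get ⟨k, h⟩ else τ (k - u.length) := by
    intro k; rw [hσ]; rfl
  have hΔ : ∀ k, (ρ k, σ k, ρ (k + 1)) ∈ B.Δ := by
    intro k
    by_cases hk : k < u.length
    · rw [hstep k hk, hσval k]
      simp only [hρ_def, if_pos hk, dif_pos hk]
      exact hpu.2.2.1 k hk
    · push_neg at hk
      have hk1 : ¬ k + 1 < u.length := by omega
      have hsub : k + 1 - u.length = (k - u.length) + 1 := by omega
      rw [hσval k]
      simp only [hρ_def, if_neg (by omega : ¬ k < u.length), if_neg hk1,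
        dif_neg (by omega : ¬ k < u.length), hsub]
      exact hρτΔ (k - u.length)
  have hAcc : ∀ N, ∃ k ≥ N, ρ k = q ∧ (ρ k, σ k, ρ (k + 1)) ∈ B.Acc := by
    intro N
    obtain ⟨k', hk', hq', hacc'⟩ := hρτacc N
    refine ⟨k' + u.length, by omega, ?_, ?_⟩
    · simp only [hρ_def, if_neg (by omega : ¬ k' + u.length < u.length),
        Nat.add_sub_cancel, hq']
    · have hsub1 : k' + u.length - u.length = k' := by omega
      have hsub2 : k' + u.length + 1 - u.length = k' + 1 := by omega
      rw [hσval (k' + u.length)]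
      simp only [hρ_def, if_neg (by omega : ¬ k' + u.length < u.length),
        if_neg (by omega : ¬ k' + u.length + 1 < u.length),
        dif_neg (by omega : ¬ k' + u.length < u.length), hsub1, hsub2]
      exact hacc'
  refine ⟨⟨ρ, hρ0, hΔ, hAcc⟩, ρ, ⟨hρ0 ▸ hq0, hΔ⟩, ?_⟩
  intro N
  obtain ⟨k, hk, -, hacc⟩ := hAcc N
  exact ⟨k, hk, hacc⟩
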